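/- For all real n ≥ 2 and all real p ≥ 21n: arccos(1 − 1/(6n²)) > 2·arccos(1 − 18/p²). -/

import Mathlib

/-- For `n ≥ 2` and `p ≥ 21n`: `arccos(1 − 1/(6n²)) > 2·arccos(1 − 18/p²)`. -/
theorem arccos_ineq (n p : ℝ) (hn : 2 ≤ n) (hp : 21 * n ≤ p) :
    2 * Real.arccos (1 - 18 / p ^ 2) < Real.arccos (1 - 1 / (6 * n ^ 2)) := by
  have hn0 : (0:ℝ) < n := by linarith
  have hp0 : (0:ℝ) < p := by nlinarith
  have hp42 : (42:ℝ) ≤ p := by nlinarith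
  have hp2 : (0:ℝ) < p ^ 2 := by positivity
  have hn2 : (0:ℝ) < n ^ 2 := by positivity
  have hale : 18 / p ^ 2 ≤ 2 / (49 * n ^ 2) := by
    rw [div_le_div_iff₀ hp2 (by positivity)]
    nlinarith
  have hapos : (0:ℝ) < 18 / p ^ 2 := by positivity
  have hha : 18 / p ^ 2 ≤ 1 := by
    rw [div_le_one hp2]; nlinarith
  have hm1a : (-1:ℝ) ≤ 1 - 18 / p ^ 2 := by linarith
  have hm1b : (1 - 18 / p ^ 2 : ℝ) ≤ 1 := by linarith
  have hbpos : (0:ℝ) < 1 / (6 * n ^ 2) := by positivity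
  have hble : 1 / (6 * n ^ 2) ≤ 1 := by
    rw [div_le_one (by positivity)]; nlinarith
  set θ := Real.arccos (1 - 18 / p ^ 2) with hθ
  have hθ0 : 0 ≤ θ := Real.arccos_nonneg _
  have hθle : θ ≤ Real.pi / 2 := Real.arccos_le_pi_div_two.mpr (by linarith)
  have hcosθ : Real.cos θ = 1 - 18 / p ^ 2 := Real.cos_arccos hm1a hm1b
  have hcos2θ : Real.cos (2 * θ) = 2 * (1 - 18 / p ^ 2) ^ 2 - 1 := by
    rw [Real.cos_two_mul, hcosθ]
  have hkey : 1 - 1 / (6 * n ^ 2) < Real.cos (2 * θ) := by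
    rw [hcos2θ]
    have h1 : 8 / (49 * n ^ 2) < 1 / (6 * n ^ 2) := by
      rw [div_lt_div_iff₀ (by positivity) (by positivity)]
      nlinarith
    have h2 : (4:ℝ) * (18 / p ^ 2) ≤ 4 * (2 / (49 * n ^ 2)) := by linarith
    have h3 : (4:ℝ) * (2 / (49 * n ^ 2)) = 8 / (49 * n ^ 2) := by ring
    nlinarith [sq_nonneg (18 / p ^ 2)]
  have hcosAc : Real.cos (Real.arccos (1 - 1 / (6 * n ^ 2))) = 1 - 1 / (6 * n ^ 2) :=
    Real.cos_arccos (by linarith) (by linarith)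
  have h2θ : 2 * θ ∈ Set.Icc 0 Real.pi := ⟨by linarith, by linarith⟩
  have hac : Real.arccos (1 - 1 / (6 * n ^ 2)) ∈ Set.Icc 0 Real.pi :=
    ⟨Real.arccos_nonneg _, Real.arccos_le_pi _⟩
  exact (Real.strictAntiOn_cos.lt_iff_gt hac h2θ).mp (by rw [hcosAc]; exact hkey)
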